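/- Let K ⊆ ℂ² be a bombon (every complex line meets K in the empty set or a closed disk) contained in the closed unit ball B of ℂ², and suppose B is an ellipsoid containing K. Then K ∩ S³ is linearly closed in S³: for any two distinct points x, y ∈ K ∩ S³, the full intersection with S³ of the complex line through x and y is contained in K. -/

import Mathlib

set_option maxHeartbeats 1000000

def IsBombon {n : ℕ} (K : Set (EuclideanSpace ℂ (Fin n))) : Prop :=
  ∀ p v : EuclideanSpace ℂ (Fin n), v ≠ 0 →
    {x | ∃ z : ℂ, x = p + z • v} ∩ K = ∅ ∨
    (∃ (c : EuclideanSpace ℂ (Fin n)) (r : ℝ), 0 ≤ r ∧ (∃ z : ℂ, c = p + z • v) ∧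
      {x | ∃ z : ℂ, x = p + z • v} ∩ K = {x | ∃ z : ℂ, ‖z‖ ≤ r ∧ x = c + z • v})

lemma quad_norm {E : Type*} [NormedAddCommGroup E] [InnerProductSpace ℂ E]
    (x v : E) (hv : v ≠ 0) :
    ∃ z₀ : ℂ, ∀ z : ℂ,
      ‖x + z • v‖ ^ 2 = ‖v‖^2 * ‖z - z₀‖^2 + (‖x‖^2 - ‖(inner ℂ x v : ℂ)‖^2 / ‖v‖^2) := by
  set A : ℝ := ‖v‖^2 with hA'
  have hA : 0 < A := pow_pos (norm_pos_iff.2 hv) 2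
  set b : ℂ := inner ℂ x v with hb
  refine ⟨((-(b.re)/A : ℝ) : ℂ) + ((b.im)/A : ℝ) * Complex.I, fun z => ?_⟩
  have h1 : ‖x + z • v‖^2 = ‖x‖^2 + 2 * (z * b).re + ‖z‖^2 * A := by
    rw [norm_add_sq (𝕜 := ℂ), inner_smul_right, norm_smul]
    simp [hA']
    ring
  have hz : ∀ w : ℂ, ‖w‖^2 = w.re^2 + w.im^2 := fun w => by
    rw [Complex.sq_norm, Complex.normSq_apply]; ring
  rw [h1, hz, hz]
  simp [Complex.mul_re, Complex.sub_re, Complex.sub_im, Complex.add_re, Complex.add_im,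
    Complex.ofReal_re, Complex.ofReal_im, Complex.mul_im, Complex.I_re, Complex.I_im]
  rw [show ‖b‖ ^ 2 = b.re^2 + b.im^2 from by rw [Complex.sq_norm, Complex.normSq_apply]; ring]
  field_simp
  ring

lemma key (zc z₀ : ℂ) (r : ℝ) (hr : 0 ≤ r)
    (h2 : ‖1 - z₀‖ = ‖z₀‖)
    (h3 : ‖zc‖ ≤ r) (h4 : ‖1 - zc‖ ≤ r)
    (h5 : ∀ z : ℂ, ‖z - zc‖ ≤ r → ‖z - z₀‖ ≤ ‖z₀‖) :
    ∀ z : ℂ, ‖z - z₀‖ = ‖z₀‖ → ‖z - zc‖ ≤ r := by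
  have hzc : zc = z₀ := by
    by_contra hne
    set d : ℝ := ‖zc - z₀‖ with hd
    have hd0 : 0 < d := norm_pos_iff.2 (sub_ne_zero.2 hne)
    set w : ℂ := zc + ((r/d : ℝ) : ℂ) * (zc - z₀) with hw
    have hw1 : ‖w - zc‖ = r := by
      have hwe : w - zc = ((r/d : ℝ) : ℂ) * (zc - z₀) := by rw [hw]; ring
      rw [hwe, norm_mul, Complex.norm_real, Real.norm_eq_abs,
        abs_of_nonneg (div_nonneg hr hd0.le), ← hd]
      field_simp
    have hw2 : ‖w - z₀‖ = d + r := by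
      have hwe : w - z₀ = ((1 + r/d : ℝ) : ℂ) * (zc - z₀) := by
        rw [hw]; push_cast; ring
      rw [hwe, norm_mul, Complex.norm_real, Real.norm_eq_abs,
        abs_of_nonneg (by positivity : (0:ℝ) ≤ 1 + r/d), ← hd]
      field_simp
    have hle : d + r ≤ ‖z₀‖ := hw2 ▸ h5 w (le_of_eq hw1)
    have t1 : ‖z₀‖ ≤ ‖z₀ - zc‖ + ‖zc‖ := by
      calc ‖z₀‖ = ‖(z₀ - zc) + zc‖ := by ring_nf
        _ ≤ _ := norm_add_le _ _
    have hdz : ‖z₀ - zc‖ = d := by rw [hd, norm_sub_rev]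
    have e1 : ‖zc‖ = r := by rw [hdz] at t1; linarith
    have e1' : ‖(z₀ - zc) + zc‖ = ‖z₀ - zc‖ + ‖zc‖ := by
      rw [hdz, e1]
      have h : (z₀ - zc) + zc = z₀ := by ring
      rw [h]; linarith
    have s1 : SameRay ℝ (z₀ - zc) zc := sameRay_iff_norm_add.2 e1'
    have t2 : ‖1 - z₀‖ ≤ ‖1 - zc‖ + ‖zc - z₀‖ := by
      calc ‖1 - z₀‖ = ‖(1 - zc) + (zc - z₀)‖ := by ring_nf
        _ ≤ _ := norm_add_le _ _
    have e2 : ‖1 - zc‖ = r := by rw [← hd, h2] at t2; linarith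
    have e2' : ‖(1 - zc) + (zc - z₀)‖ = ‖1 - zc‖ + ‖zc - z₀‖ := by
      have h : (1 - zc) + (zc - z₀) = 1 - z₀ := by ring
      rw [h, e2, ← hd, h2]
      linarith
    have s2 : SameRay ℝ (1 - zc) (zc - z₀) := sameRay_iff_norm_add.2 e2'
    have q1 := s1.norm_smul_eq
    have q2 := s2.norm_smul_eq
    rw [hdz, e1] at q1
    rw [e2, ← hd] at q2
    have hsum : d • zc + d • (1 - zc) = 0 := by
      rw [q1, ← q2]; module
    have hd1 : d • (1 : ℂ) = 0 := by rw [← hsum]; module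
    have : (d : ℂ) = 0 := by simpa using hd1
    exact hd0.ne' (by exact_mod_cast this)
  intro z hz
  rw [hzc, hz, ← hzc]
  exact h3

theorem stmt12 (K : Set (EuclideanSpace ℂ (Fin 2)))
    (hconv : Convex ℝ K) (hcomp : IsCompact K) (hbom : IsBombon K)
    (hsub : K ⊆ Metric.closedBall 0 1)
    (x y : EuclideanSpace ℂ (Fin 2))
    (hx : x ∈ K ∩ Metric.sphere 0 1) (hy : y ∈ K ∩ Metric.sphere 0 1)
    (hxy : x ≠ y) :
    {p | ∃ z : ℂ, p = x + z • (y - x)} ∩ Metric.sphere 0 1 ⊆ K := by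
  set v : EuclideanSpace ℂ (Fin 2) := y - x with hvdef
  have hv : v ≠ 0 := sub_ne_zero.2 (Ne.symm hxy)
  have hxS : ‖x‖ = 1 := mem_sphere_zero_iff_norm.1 hx.2
  have hyS : ‖y‖ = 1 := mem_sphere_zero_iff_norm.1 hy.2
  have hfy : x + (1 : ℂ) • v = y := by rw [hvdef]; simp
  rcases hbom x v hv with hemp | ⟨c, r, hr, ⟨zc, hc⟩, heq⟩
  · exfalso
    have : x ∈ {p : EuclideanSpace ℂ (Fin 2) | ∃ z : ℂ, p = x + z • v} ∩ K :=
      ⟨⟨0, by simp⟩, hx.1⟩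
    rw [hemp] at this
    exact this
  -- injectivity of the parametrization
  have hinj : ∀ z w : ℂ, x + z • v = x + w • v → z = w := by
    intro z w h
    have h2 : (z - w) • v = 0 := by
      rw [sub_smul]
      have := add_left_cancel h
      rw [this]; abel
    rcases smul_eq_zero.1 h2 with h | h
    · exact sub_eq_zero.1 h
    · exact absurd h hv
  -- membership correspondence
  have hK : ∀ z : ℂ, (x + z • v ∈ K ↔ ‖z - zc‖ ≤ r) := by
    intro z
    constructor
    · intro hzK
      have hmem : x + z • v ∈ {p : EuclideanSpace ℂ (Fin 2) | ∃ z : ℂ, p = x + z • v} ∩ K :=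
        ⟨⟨z, rfl⟩, hzK⟩
      rw [heq] at hmem
      obtain ⟨w, hw, hwe⟩ := hmem
      have : x + z • v = x + (zc + w) • v := by
        rw [hwe, hc, add_smul]; abel
      have := hinj _ _ this
      rw [this]
      simpa using hw
    · intro hzr
      have hmem : x + z • v ∈ {p : EuclideanSpace ℂ (Fin 2) |
          ∃ w : ℂ, ‖w‖ ≤ r ∧ p = c + w • v} := by
        refine ⟨z - zc, hzr, ?_⟩
        rw [hc]
        module
      rw [← heq] at hmem
      exact hmem.2
  obtain ⟨z₀, hquad⟩ := quad_norm x v hv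
  set A : ℝ := ‖v‖^2 with hAdef
  have hA : 0 < A := pow_pos (norm_pos_iff.2 hv) 2
  set m : ℝ := ‖x‖^2 - ‖(inner ℂ x v : ℂ)‖^2 / ‖v‖^2 with hmdef
  have h0 : A * ‖z₀‖^2 + m = 1 := by
    have := hquad 0
    simp only [zero_smul, add_zero, zero_sub, norm_neg] at this
    rw [← this, hxS]; norm_num
  have hsq : ∀ a b : ℝ, 0 ≤ a → 0 ≤ b → a^2 = b^2 → a = b := by
    intro a b ha hb h
    rw [← Real.sqrt_sq ha, ← Real.sqrt_sq hb, h]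
  have hnorm_eq : ∀ z : ℂ, ‖x + z • v‖ = 1 → ‖z - z₀‖ = ‖z₀‖ := by
    intro z hz
    have hq := hquad z
    rw [show ‖x + z • v‖ = 1 from hz] at hq
    exact hsq _ _ (norm_nonneg _) (norm_nonneg _) (by nlinarith)
  have h2 : ‖1 - z₀‖ = ‖z₀‖ := by
    apply hnorm_eq
    rw [hfy]; exact hyS
  have h3 : ‖zc‖ ≤ r := by
    have := (hK 0).1 (by simpa using hx.1)
    simpa using this
  have h4 : ‖1 - zc‖ ≤ r := (hK 1).1 (by rw [hfy]; exact hy.1)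
  have h5 : ∀ z : ℂ, ‖z - zc‖ ≤ r → ‖z - z₀‖ ≤ ‖z₀‖ := by
    intro z hz
    have hzK : x + z • v ∈ K := (hK z).2 hz
    have hball : ‖x + z • v‖ ≤ 1 := mem_closedBall_zero_iff.1 (hsub hzK)
    have hq := hquad z
    have hsqle : ‖z - z₀‖^2 ≤ ‖z₀‖^2 := by
      have h1 : ‖x + z • v‖^2 ≤ 1 :=
        le_trans (by nlinarith [norm_nonneg (x + z • v)]) hball
      nlinarith
    calc ‖z - z₀‖ = Real.sqrt (‖z - z₀‖^2) := (Real.sqrt_sq (norm_nonneg _)).symm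
      _ ≤ Real.sqrt (‖z₀‖^2) := Real.sqrt_le_sqrt hsqle
      _ = ‖z₀‖ := Real.sqrt_sq (norm_nonneg _)
  intro p ⟨⟨z, hp⟩, hpS⟩
  have hpn : ‖x + z • v‖ = 1 := by rw [← hp]; exact mem_sphere_zero_iff_norm.1 hpS
  have := key zc z₀ r hr h2 h3 h4 h5 z (hnorm_eq z hpn)
  rw [hp]
  exact (hK z).2 this
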